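/- Let U ⊆ {1,2,3}^k be such that in each coordinate only two of the three symbols occur. Let H_1, H_2, H_3 be the subgroups of Sym(U) preserving (pointwise) the coordinates where only {1,2}, only {2,3}, and only {1,3} occur, respectively. Then U is a USP if and only if H_1, H_2, H_3 satisfy the triple product property in Sym(U). -/

import Mathlib

/-- At least two of three propositions hold. -/
def AtLeastTwo (P Q R : Prop) : Prop := (P ∧ Q) ∨ (P ∧ R) ∨ (Q ∧ R)

/-- A USP (symbols `1,2,3` represented by `0,1,2 : Fin 3`). -/
def IsUSP {k : ℕ} (U : Set (Fin k → Fin 3)) : Prop :=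
  ∀ π₁ π₂ π₃ : Equiv.Perm U, (π₁ = π₂ ∧ π₂ = π₃) ∨
    ∃ u : U, ∃ i : Fin k,
      AtLeastTwo (((π₁ u : U) : Fin k → Fin 3) i = 0)
        (((π₂ u : U) : Fin k → Fin 3) i = 1)
        (((π₃ u : U) : Fin k → Fin 3) i = 2)

/-- The subgroup of `Sym(U)` preserving all coordinates in which the symbol `s`
does not occur (i.e. in which only the other two symbols occur). -/
def avoidSubgroup {k : ℕ} (U : Set (Fin k → Fin 3)) (s : Fin 3) :
    Set (Equiv.Perm U) :=
  {π | ∀ (u : U) (j : Fin k), (∀ v : U, ((v : Fin k → Fin 3) j ≠ s)) →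
    ((π u : U) : Fin k → Fin 3) j = (u : Fin k → Fin 3) j}

section aux

variable {k : ℕ} {U : Set (Fin k → Fin 3)}

private lemma fin3_cases (t s : Fin 3) : t = s ∨ t = s + 1 ∨ t = s + 2 := by revert t s; decide

private lemma fin3_eq2 (s a : Fin 3) (h1 : a ≠ s) (h2 : a ≠ s + 1) : a = s + 2 := by
  revert s a; decide

private lemma fin3_eq1 (s a : Fin 3) (h1 : a ≠ s) (h2 : a ≠ s + 2) : a = s + 1 := by
  revert s a; decide

private lemma fin3_ne21 (s : Fin 3) : s + 2 ≠ s + 1 := by revert s; decide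

private lemma fin3_ne12 (s : Fin 3) : s + 1 ≠ s + 2 := by revert s; decide

private lemma mem_avoid_iff
    (htwo : ∀ j : Fin k, ∃ s : Fin 3, ∀ u : U, (u : Fin k → Fin 3) j ≠ s)
    (g : Equiv.Perm U) (s : Fin 3) :
    g ∈ avoidSubgroup U s ↔
      ∀ (v : U) (i : Fin k), (v : Fin k → Fin 3) i = s + 2 →
        ((g v : U) : Fin k → Fin 3) i ≠ s + 1 := by
  constructor
  · intro hg v i hv hb
    obtain ⟨t, ht⟩ := htwo i
    rcases fin3_cases t s with h | h | h
    · subst h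
      rw [hg v i ht, hv] at hb
      exact fin3_ne21 _ hb
    · subst h; exact ht (g v) hb
    · subst h; exact ht v hv
  · intro hg u j havoid
    have claim1 : ∀ v : U, (v : Fin k → Fin 3) j = s + 2 →
        ((g v : U) : Fin k → Fin 3) j = s + 2 := by
      intro v hv
      exact fin3_eq2 s _ (havoid (g v)) (hg v j hv)
    have claim2 : ∀ v : U, ((g v : U) : Fin k → Fin 3) j = s + 2 →
        (v : Fin k → Fin 3) j = s + 2 := by
      intro v hgv
      let S := {w : U // (w : Fin k → Fin 3) j = s + 2}
      let f : S → S := fun w => ⟨g w.1, claim1 w.1 w.2⟩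
      have hinj : Function.Injective f := by
        intro a b hab
        exact Subtype.ext (g.injective (congrArg Subtype.val hab))
      obtain ⟨w, hw⟩ := Finite.injective_iff_surjective.mp hinj ⟨g v, hgv⟩
      have h1 : g w.1 = g v := congrArg Subtype.val hw
      have h2 : w.1 = v := g.injective h1
      rw [← h2]; exact w.2
    rcases fin3_cases ((u : Fin k → Fin 3) j) s with h | h | h
    · exact absurd h (havoid u)
    · have h2 : ((g u : U) : Fin k → Fin 3) j ≠ s + 2 := by
        intro hc
        have := claim2 u hc
        rw [h] at this
        exact fin3_ne12 s this
      rw [h]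
      exact fin3_eq1 s _ (havoid (g u)) h2
    · rw [h]; exact claim1 u h

private lemma mem_avoid_iff' 
    (htwo : ∀ j : Fin k, ∃ s : Fin 3, ∀ u : U, (u : Fin k → Fin 3) j ≠ s)
    (g : Equiv.Perm U) (s a b : Fin 3) (ha : s + 2 = a) (hb : s + 1 = b) :
    g ∈ avoidSubgroup U s ↔
      ∀ (v : U) (i : Fin k), (v : Fin k → Fin 3) i = a →
        ((g v : U) : Fin k → Fin 3) i ≠ b := by
  subst ha hb
  exact mem_avoid_iff htwo g s

end aux

theorem stmt_9 {k : ℕ} (U : Set (Fin k → Fin 3))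
    (htwo : ∀ j : Fin k, ∃ s : Fin 3, ∀ u : U, (u : Fin k → Fin 3) j ≠ s) :
    IsUSP U ↔
      (∀ h₁ ∈ avoidSubgroup U 2, ∀ h₂ ∈ avoidSubgroup U 0, ∀ h₃ ∈ avoidSubgroup U 1,
        h₁ * h₂ * h₃ = 1 → h₁ = 1 ∧ h₂ = 1 ∧ h₃ = 1) := by
  constructor
  · intro husp h₁ hm₁ h₂ hm₂ h₃ hm₃ hprod
    rw [mem_avoid_iff' htwo h₁ 2 1 0 (by decide) (by decide)] at hm₁
    rw [mem_avoid_iff' htwo h₂ 0 2 1 (by decide) (by decide)] at hm₂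
    rw [mem_avoid_iff' htwo h₃ 1 0 2 (by decide) (by decide)] at hm₃
    rcases husp (h₁ * h₂) h₂ 1 with ⟨he1, he2⟩ | ⟨u, i, hal⟩
    · have hh1 : h₁ = 1 := by
        rw [he2, mul_one] at he1
        exact he1
      refine ⟨hh1, he2, ?_⟩
      rw [hh1, he2, one_mul, one_mul] at hprod
      exact hprod
    · exfalso
      have h12inv : h₁ * h₂ = h₃⁻¹ := by
        rw [mul_eq_one_iff_eq_inv] at hprod
        exact hprod
      rcases hal with ⟨hP, hQ⟩ | ⟨hP, hR⟩ | ⟨hQ, hR⟩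
      · exact hm₁ (h₂ u) i hQ (by simpa using hP)
      · have hR' : (u : Fin k → Fin 3) i = 2 := by simpa using hR
        have := hm₃ ((h₁ * h₂) u) i hP
        rw [h12inv] at this
        simp only [Equiv.Perm.coe_inv, Equiv.apply_symm_apply] at this
        exact this hR'
      · have hR' : (u : Fin k → Fin 3) i = 2 := by simpa using hR
        exact hm₂ u i hR' hQ
  · intro htpp π₁ π₂ π₃
    by_cases hw : ∃ u : U, ∃ i : Fin k,
      AtLeastTwo (((π₁ u : U) : Fin k → Fin 3) i = 0)
        (((π₂ u : U) : Fin k → Fin 3) i = 1)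
        (((π₃ u : U) : Fin k → Fin 3) i = 2)
    · exact Or.inr hw
    left
    have hno : ∀ (u : U) (i : Fin k),
        ¬ AtLeastTwo (((π₁ u : U) : Fin k → Fin 3) i = 0)
          (((π₂ u : U) : Fin k → Fin 3) i = 1)
          (((π₃ u : U) : Fin k → Fin 3) i = 2) :=
      fun u i h => hw ⟨u, i, h⟩
    have hm₁ : π₁ * π₂⁻¹ ∈ avoidSubgroup U 2 := by
      rw [mem_avoid_iff' htwo _ 2 1 0 (by decide) (by decide)]
      intro v i hv hc
      refine hno (π₂⁻¹ v) i (Or.inl ⟨?_, ?_⟩)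
      · simpa using hc
      · simpa using hv
    have hm₂ : π₂ * π₃⁻¹ ∈ avoidSubgroup U 0 := by
      rw [mem_avoid_iff' htwo _ 0 2 1 (by decide) (by decide)]
      intro v i hv hc
      refine hno (π₃⁻¹ v) i (Or.inr (Or.inr ⟨?_, ?_⟩))
      · simpa using hc
      · simpa using hv
    have hm₃ : π₃ * π₁⁻¹ ∈ avoidSubgroup U 1 := by
      rw [mem_avoid_iff' htwo _ 1 0 2 (by decide) (by decide)]
      intro v i hv hc
      refine hno (π₁⁻¹ v) i (Or.inr (Or.inl ⟨?_, ?_⟩))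
      · simpa using hv
      · simpa using hc
    have hprod : (π₁ * π₂⁻¹) * (π₂ * π₃⁻¹) * (π₃ * π₁⁻¹) = 1 := by group
    obtain ⟨e1, e2, -⟩ := htpp _ hm₁ _ hm₂ _ hm₃ hprod
    constructor
    · rw [mul_inv_eq_one] at e1; exact e1
    · rw [mul_inv_eq_one] at e2; exact e2
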